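/- Let X be a finite set with |X| = m ≥ 2, let k ≥ 2, and fix a ∈ X. Then the set X₂ = {f ∈ 𝔶_k(X) : a ∈ supp(f)} is a hyperplane of the combinatorial Veronesian V(X,k); the set of lines of V(X,k) all of whose points lie in X₂ is {e ∈ 𝔶_{<k}(X) : a ∈ supp(e)}; for every line e with a ∉ supp(e), the unique point of X₂ incident with e is e·a^{k−|e|}; and the map f ↦ f·a is an isomorphism from V(X,k−1) onto the restriction V(X,k)↾X₂. -/
import Mathlib


/-- An incidence structure: a set of points, a set of lines (inside ambient types
`P` and `L`), and an incidence relation. -/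
structure IncStr (P : Type*) (L : Type*) where
  pts : Set P
  lns : Set L
  inc : P → L → Prop

namespace IncStr

variable {P L P' L' : Type*}

/-- Incidence only relates points of the structure with lines of the structure. -/
def Proper (K : IncStr P L) : Prop :=
  ∀ p l, K.inc p l → p ∈ K.pts ∧ l ∈ K.lns

/-- A partial linear space: two distinct points incident with two lines force the
lines to coincide. -/
def IsPLS (K : IncStr P L) : Prop :=
  K.Proper ∧
    ∀ a b A B, a ≠ b → K.inc a A → K.inc b A → K.inc a B → K.inc b B → A = B

/-- A subspace: whenever two distinct points of `H` are incident with a line, every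
point incident with that line belongs to `H`. -/
def IsSubspace (K : IncStr P L) (H : Set P) : Prop :=
  H ⊆ K.pts ∧
    ∀ a b A, a ∈ H → b ∈ H → a ≠ b → K.inc a A → K.inc b A →
      ∀ x, K.inc x A → x ∈ H

/-- A hyperplane: a proper subspace met by every line. -/
def IsHyperplane (K : IncStr P L) (H : Set P) : Prop :=
  K.IsSubspace H ∧ H ≠ K.pts ∧ ∀ A ∈ K.lns, ∃ x ∈ H, K.inc x A

/-- `L[H]`: the lines all of whose incident points lie in `H`. -/
def linesIn (K : IncStr P L) (H : Set P) : Set L :=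
  {A ∈ K.lns | ∀ x, K.inc x A → x ∈ H}

/-- The restriction `K↾H`. -/
def restrict (K : IncStr P L) (H : Set P) : IncStr P L where
  pts := H
  lns := K.linesIn H
  inc := fun p l => K.inc p l ∧ p ∈ H ∧ l ∈ K.linesIn H

/-- The reduct `K∖H`. -/
def reduct (K : IncStr P L) (H : Set P) : IncStr P L where
  pts := K.pts \ H
  lns := K.lns \ K.linesIn H
  inc := fun p l => K.inc p l ∧ p ∈ K.pts \ H ∧ l ∈ K.lns \ K.linesIn H

/-- The dual structure `K°`. -/
def dual (K : IncStr P L) : IncStr L P where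
  pts := K.lns
  lns := K.pts
  inc := fun l p => K.inc p l

/-- The join `K₁ ⋊_∞ K₂` determined by a map `f = ∞` from (the ambient type of)
lines of `K₁` to points of `K₂`. -/
def join (K₁ K₂ : IncStr P L) (f : L → P) : IncStr P L where
  pts := K₁.pts ∪ K₂.pts
  lns := K₁.lns ∪ K₂.lns
  inc := fun p l => K₁.inc p l ∨ K₂.inc p l ∨ (l ∈ K₁.lns ∧ p = f l)

/-- Condition (∗): a point of `K₁` incident with two lines of `K₁` having the same
image under `∞` forces the lines to coincide. -/
def StarCond (K₁ : IncStr P L) (f : L → P) : Prop :=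
  ∀ x A B, K₁.inc x A → K₁.inc x B → f A = f B → A = B

/-- The rank of a point: the number of lines incident with it. -/
noncomputable def pointRank (K : IncStr P L) (p : P) : ℕ :=
  {l | K.inc p l}.ncard

/-- The size of a line: the number of points incident with it. -/
noncomputable def lineSize (K : IncStr P L) (l : L) : ℕ :=
  {p | K.inc p l}.ncard

/-- A finite `(ν_ρ, β_κ)`-configuration. -/
def IsConfig (K : IncStr P L) (ν ρ β κ : ℕ) : Prop :=
  K.pts.Finite ∧ K.lns.Finite ∧ K.IsPLS ∧
  K.pts.ncard = ν ∧ K.lns.ncard = β ∧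
  (∀ p ∈ K.pts, K.pointRank p = ρ) ∧
  (∀ l ∈ K.lns, K.lineSize l = κ)

/-- A binomial configuration of type `B(k,m)`. -/
def IsBinomial (K : IncStr P L) (k m : ℕ) : Prop :=
  K.IsConfig ((m + k - 1).choose k) k ((m + k - 1).choose m) m

/-- `(fp, fl)` is an isomorphism of incidence structures: a pair of bijections
(on points and on lines) preserving and reflecting incidence. -/
def IsIso (K : IncStr P L) (K' : IncStr P' L') (fp : P → P') (fl : L → L') : Prop :=
  Set.BijOn fp K.pts K'.pts ∧ Set.BijOn fl K.lns K'.lns ∧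
    ∀ p ∈ K.pts, ∀ l ∈ K.lns, (K.inc p l ↔ K'.inc (fp p) (fl l))

def Isomorphic (K : IncStr P L) (K' : IncStr P' L') : Prop :=
  ∃ fp fl, IsIso K K' fp fl

/-- A formally disjoint (tagged) copy of an incidence structure. -/
def tag (K : IncStr P L) (b : Bool) : IncStr (P × Bool) (L × Bool) where
  pts := (fun p => (p, b)) '' K.pts
  lns := (fun l => (l, b)) '' K.lns
  inc := fun p l => K.inc p.1 l.1 ∧ p.2 = b ∧ l.2 = b

end IncStr

/-- The combinatorial Grassmannian `G(Y,k) = ⟨℘_k(Y), ℘_{k+1}(Y), ⊂⟩`. -/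
def Gras {α : Type*} (Y : Finset α) (k : ℕ) : IncStr (Finset α) (Finset α) where
  pts := {a : Finset α | a ⊆ Y ∧ a.card = k}
  lns := {A : Finset α | A ⊆ Y ∧ A.card = k + 1}
  inc := fun a A => a ⊆ Y ∧ a.card = k ∧ A ⊆ Y ∧ A.card = k + 1 ∧ a ⊂ A

/-- The combinatorial Veronesian `V(Y,k)`: points are multisets of size `k` with
elements in `Y`, lines are multisets of size `< k` with elements in `Y`, a point `f`
is incident with a line `e` iff `f = e·x^{k-|e|}` for some `x ∈ Y`. -/
def Ver {α : Type*} (Y : Finset α) (k : ℕ) : IncStr (Multiset α) (Multiset α) where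
  pts := {f : Multiset α | (∀ x ∈ f, x ∈ Y) ∧ Multiset.card f = k}
  lns := {e : Multiset α | (∀ x ∈ e, x ∈ Y) ∧ Multiset.card e < k}
  inc := fun f e =>
    (∀ x ∈ f, x ∈ Y) ∧ Multiset.card f = k ∧
    (∀ x ∈ e, x ∈ Y) ∧ Multiset.card e < k ∧
    ∃ x ∈ Y, f = e + Multiset.replicate (k - Multiset.card e) x

section Helpers

variable {α : Type*} [Fintype α]

lemma ver_inc (k : ℕ) (f e : Multiset α) :
    (Ver (Finset.univ : Finset α) k).inc f e ↔
      Multiset.card f = k ∧ Multiset.card e < k ∧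
        ∃ x, f = e + Multiset.replicate (k - Multiset.card e) x := by
  simp [Ver]

lemma ver_pts (k : ℕ) (f : Multiset α) :
    f ∈ (Ver (Finset.univ : Finset α) k).pts ↔ Multiset.card f = k := by
  simp [Ver]

lemma ver_lns (k : ℕ) (e : Multiset α) :
    e ∈ (Ver (Finset.univ : Finset α) k).lns ↔ Multiset.card e < k := by
  simp [Ver]

end Helpers
/-- for `|X| = m ≥ 2`, `k ≥ 2` and `a ∈ X`:
`X₂ = {f ∈ 𝔶_k(X) : a ∈ supp f}` is a hyperplane of `V(X,k)`; the lines all of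
whose points lie in `X₂` are `{e ∈ 𝔶_{<k}(X) : a ∈ supp e}`; for every line `e`
with `a ∉ supp e` the unique point of `X₂` incident with `e` is `e·a^{k-|e|}`;
and `f ↦ f·a` is an isomorphism of `V(X,k-1)` onto `V(X,k)↾X₂`. -/
theorem statement14 {α : Type*} [Fintype α] [DecidableEq α] (m k : ℕ)
    (hm : 2 ≤ m) (hk : 2 ≤ k) (hcard : Fintype.card α = m) (a : α) :
    (Ver (Finset.univ : Finset α) k).IsHyperplane
      {f : Multiset α | Multiset.card f = k ∧ a ∈ f} ∧
    (Ver (Finset.univ : Finset α) k).linesIn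
        {f : Multiset α | Multiset.card f = k ∧ a ∈ f}
      = {e : Multiset α | Multiset.card e < k ∧ a ∈ e} ∧
    (∀ e : Multiset α, Multiset.card e < k → a ∉ e →
      (Ver (Finset.univ : Finset α) k).inc
          (e + Multiset.replicate (k - Multiset.card e) a) e ∧
      (e + Multiset.replicate (k - Multiset.card e) a)
          ∈ {f : Multiset α | Multiset.card f = k ∧ a ∈ f} ∧
      ∀ p ∈ {f : Multiset α | Multiset.card f = k ∧ a ∈ f},
        (Ver (Finset.univ : Finset α) k).inc p e →
          p = e + Multiset.replicate (k - Multiset.card e) a) ∧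
    IncStr.IsIso (Ver (Finset.univ : Finset α) (k - 1))
      ((Ver (Finset.univ : Finset α) k).restrict
        {f : Multiset α | Multiset.card f = k ∧ a ∈ f})
      (fun f => f + {a}) (fun e => e + {a}) := by
  have hk0 : 0 < k := by omega
  obtain ⟨b, hb⟩ : ∃ b : α, b ≠ a :=
    Fintype.exists_ne_of_one_lt_card (by omega) a
  set H : Set (Multiset α) := {f : Multiset α | Multiset.card f = k ∧ a ∈ f} with hHdef
  have hmemH : ∀ f : Multiset α, f ∈ H ↔ Multiset.card f = k ∧ a ∈ f := fun f => Iff.rfl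
  have key : ∀ s : Multiset α, s + ({a} : Multiset α) = a ::ₘ s := fun s => by
    rw [add_comm, Multiset.singleton_add]
  -- part 2 first
  have hL2 : (Ver (Finset.univ : Finset α) k).linesIn H
      = {e : Multiset α | Multiset.card e < k ∧ a ∈ e} := by
    ext e
    constructor
    · rintro ⟨he, hall⟩
      have hec : Multiset.card e < k := (ver_lns k e).1 he
      refine ⟨hec, ?_⟩
      have hinc : (Ver (Finset.univ : Finset α) k).inc
          (e + Multiset.replicate (k - Multiset.card e) b) e := by
        rw [ver_inc]
        exact ⟨by simp; omega, hec, b, rfl⟩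
      have := (hmemH _).1 (hall _ hinc)
      rcases Multiset.mem_add.1 this.2 with h | h
      · exact h
      · exact absurd (Multiset.eq_of_mem_replicate h) hb.symm
    · rintro ⟨hec, hae⟩
      refine ⟨(ver_lns k e).2 hec, ?_⟩
      intro x hx
      rw [ver_inc] at hx
      obtain ⟨hxc, -, y, hy⟩ := hx
      exact (hmemH x).2 ⟨hxc, by rw [hy]; exact Multiset.mem_add.2 (Or.inl hae)⟩
  refine ⟨⟨⟨fun f hf => (ver_pts k f).2 hf.1, ?_⟩, ?_, ?_⟩, hL2, ?_, ?_⟩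
  · -- subspace closure
    intro p q A hp hq hpq hpA hqA x hxA
    rw [ver_inc] at hpA hqA hxA
    obtain ⟨hpc, hAc, y, hy⟩ := hpA
    obtain ⟨hqc, -, z, hz⟩ := hqA
    obtain ⟨hxc, -, w, hw⟩ := hxA
    have haA : a ∈ A := by
      have hpa : a ∈ A + Multiset.replicate (k - Multiset.card A) y := by
        rw [← hy]; exact hp.2
      have hqa : a ∈ A + Multiset.replicate (k - Multiset.card A) z := by
        rw [← hz]; exact hq.2
      rcases Multiset.mem_add.1 hpa with h | h
      · exact h
      rcases Multiset.mem_add.1 hqa with h' | h'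
      · exact h'
      exfalso
      apply hpq
      rw [hy, hz, ← Multiset.eq_of_mem_replicate h, ← Multiset.eq_of_mem_replicate h']
    exact (hmemH x).2 ⟨hxc, by rw [hw]; exact Multiset.mem_add.2 (Or.inl haA)⟩
  · -- H ≠ pts
    intro h
    have hb' : (Multiset.replicate k b : Multiset α) ∈ H := by
      rw [h, ver_pts]; simp
    have := ((hmemH _).1 hb').2
    exact hb.symm (Multiset.eq_of_mem_replicate this)
  · -- every line meets H
    intro A hA
    have hAc : Multiset.card A < k := (ver_lns k A).1 hA
    refine ⟨A + Multiset.replicate (k - Multiset.card A) a, ?_, ?_⟩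
    · exact (hmemH _).2 ⟨by simp; omega,
        Multiset.mem_add.2 (Or.inr (Multiset.mem_replicate.2 ⟨by omega, rfl⟩))⟩
    · rw [ver_inc]; exact ⟨by simp; omega, hAc, a, rfl⟩
  · -- part 3
    intro e hec hae
    refine ⟨?_, ?_, ?_⟩
    · rw [ver_inc]
      exact ⟨by simp; omega, hec, a, rfl⟩
    · exact (hmemH _).2 ⟨by simp; omega,
        Multiset.mem_add.2 (Or.inr (Multiset.mem_replicate.2 ⟨by omega, rfl⟩))⟩
    intro p hp hinc
    rw [ver_inc] at hinc
    obtain ⟨hpc, -, x, hx⟩ := hinc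
    have hap : a ∈ e + Multiset.replicate (k - Multiset.card e) x := by
      rw [← hx]; exact hp.2
    rcases Multiset.mem_add.1 hap with h | h
    · exact absurd h hae
    · rw [hx, Multiset.eq_of_mem_replicate h]
  · -- part 4: isomorphism
    have hcards : ∀ s : Multiset α, Multiset.card (s + ({a} : Multiset α))
        = Multiset.card s + 1 := fun s => by simp
    refine ⟨⟨?_, ?_, ?_⟩, ⟨?_, ?_, ?_⟩, ?_⟩
    · -- MapsTo points
      intro f hf
      have hfc : Multiset.card f = k - 1 := (ver_pts (k - 1) f).1 hf
      show f + {a} ∈ H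
      exact (hmemH _).2 ⟨by rw [hcards]; omega,
        Multiset.mem_add.2 (Or.inr (Multiset.mem_singleton.2 rfl))⟩
    · intro f _ g _ h
      exact add_right_cancel h
    · -- SurjOn points
      intro f hf
      obtain ⟨hfc, haf⟩ := (hmemH f).1 hf
      refine ⟨f.erase a, ?_, ?_⟩
      · rw [ver_pts, Multiset.card_erase_of_mem haf, hfc]; simp only [Nat.pred_eq_sub_one]
      · show f.erase a + {a} = f
        rw [key, Multiset.cons_erase haf]
    · -- MapsTo lines
      intro e he
      have hec : Multiset.card e < k - 1 := (ver_lns (k - 1) e).1 he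
      show e + {a} ∈ (Ver (Finset.univ : Finset α) k).linesIn H
      rw [hL2]
      exact ⟨by rw [hcards]; omega,
        Multiset.mem_add.2 (Or.inr (Multiset.mem_singleton.2 rfl))⟩
    · intro e _ g _ h
      exact add_right_cancel h
    · -- SurjOn lines
      intro e he
      rw [show ((Ver (Finset.univ : Finset α) k).restrict H).lns
          = (Ver (Finset.univ : Finset α) k).linesIn H from rfl, hL2] at he
      obtain ⟨hec, hae⟩ := he
      refine ⟨e.erase a, ?_, ?_⟩
      · have h1 : 0 < Multiset.card e := Multiset.card_pos_iff_exists_mem.2 ⟨a, hae⟩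
        rw [ver_lns, Multiset.card_erase_of_mem hae]; simp only [Nat.pred_eq_sub_one]; omega
      · show e.erase a + {a} = e
        rw [key, Multiset.cons_erase hae]
    · -- incidence iff
      intro p hp e he
      have hpc : Multiset.card p = k - 1 := (ver_pts (k - 1) p).1 hp
      have hec : Multiset.card e < k - 1 := (ver_lns (k - 1) e).1 he
      have hrep : k - Multiset.card (e + ({a} : Multiset α))
          = k - 1 - Multiset.card e := by rw [hcards]; omega
      constructor
      · intro hinc
        rw [ver_inc] at hinc
        obtain ⟨-, -, x, hx⟩ := hinc
        refine ⟨?_, ?_, ?_⟩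
        · rw [ver_inc]
          refine ⟨by rw [hcards]; omega, by rw [hcards]; omega, x, ?_⟩
          rw [hrep, hx]
          simp [add_comm, add_assoc, add_left_comm]
        · exact (hmemH _).2 ⟨by rw [hcards]; omega,
            Multiset.mem_add.2 (Or.inr (Multiset.mem_singleton.2 rfl))⟩
        · rw [hL2]
          exact ⟨by rw [hcards]; omega,
            Multiset.mem_add.2 (Or.inr (Multiset.mem_singleton.2 rfl))⟩
      · rintro ⟨hinc, -, -⟩
        rw [ver_inc] at hinc
        obtain ⟨-, -, x, hx⟩ := hinc
        rw [ver_inc]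
        refine ⟨hpc, hec, x, ?_⟩
        rw [hrep] at hx
        have hx' : p + ({a} : Multiset α)
            = (e + {a}) + Multiset.replicate (k - 1 - Multiset.card e) x := hx
        have : p + ({a} : Multiset α)
            = (e + Multiset.replicate (k - 1 - Multiset.card e) x) + {a} := by
          rw [hx']; simp [add_comm, add_assoc, add_left_comm]
        exact add_right_cancel this
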